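/- Let G=(V,E) be a finite simple connected graph that is not a complete graph, and let K be a field. Then the cut ideal I_G has a minimal generator of degree 2; more precisely, the degree-1 homogeneous component of I_G is zero while the degree-2 homogeneous component of I_G is nonzero. -/

import Mathlib

open scoped Classical

noncomputable section

namespace CutPaper

open MvPolynomial

/-- An edge `e` is cut by the partition `A | Aᶜ` if it has exactly one endpoint in `A`. -/
def IsCutEdge {V : Type} (A : Set V) (e : Sym2 V) : Prop :=
  ∃ u v : V, e = s(u, v) ∧ u ∈ A ∧ v ∉ A

/-- The cut set of `A`: all edges of `G` with exactly one endpoint in `A`. -/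
def cutSet {V : Type} (G : SimpleGraph V) (A : Set V) : Set (Sym2 V) :=
  {e ∈ G.edgeSet | IsCutEdge A e}

lemma isCutEdge_compl {V : Type} (A : Set V) (e : Sym2 V) :
    IsCutEdge Aᶜ e ↔ IsCutEdge A e := by
  constructor <;> rintro ⟨u, v, rfl, hu, hv⟩
  · exact ⟨v, u, Sym2.eq_swap, Set.notMem_compl_iff.mp hv, hu⟩
  · exact ⟨v, u, Sym2.eq_swap, hv, not_not_intro hu⟩

/-- Two subsets determine the same unordered partition `A | Aᶜ` of `V`
iff they are equal or complementary. -/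
def partitionSetoid (V : Type) : Setoid (Set V) where
  r A B := B = A ∨ B = Aᶜ
  iseqv := by
    refine ⟨fun A => Or.inl rfl, @fun A B h => ?_, @fun A B C h1 h2 => ?_⟩
    · rcases h with rfl | rfl
      · exact Or.inl rfl
      · exact Or.inr (compl_compl A).symm
    · rcases h1 with rfl | rfl <;> rcases h2 with rfl | rfl
      · exact Or.inl rfl
      · exact Or.inr rfl
      · exact Or.inr rfl
      · exact Or.inl (compl_compl A)

/-- The unordered partitions `A | Aᶜ` of `V`, indexing the variables of `S_G`. -/
abbrev Partition (V : Type) := Quotient (partitionSetoid V)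

variable (K : Type) [CommRing K]

/-- The variable `q_{A|Aᶜ}` of the polynomial ring `S_G`. -/
def qPart {V : Type} (A : Set V) : MvPolynomial (Partition V) K :=
  X (Quotient.mk (partitionSetoid V) A)

/-- The monomial `u_A = ∏_{e ∈ Cut(A)} s_e · ∏_{e ∈ E \ Cut(A)} t_e`;
the variable `s_e` is `X (true, e)` and `t_e` is `X (false, e)`. -/
def cutMonomial {V : Type} [Finite V] (G : SimpleGraph V) (A : Set V) :
    MvPolynomial (Bool × Sym2 V) K :=
  ∏ e ∈ (Set.toFinite G.edgeSet).toFinset,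
    if IsCutEdge A e then X (true, e) else X (false, e)

lemma cutMonomial_compl {V : Type} [Finite V] (G : SimpleGraph V) (A : Set V) :
    cutMonomial K G Aᶜ = cutMonomial K G A := by
  unfold cutMonomial
  refine Finset.prod_congr rfl fun e _ => ?_
  by_cases h : IsCutEdge A e
  · rw [if_pos ((isCutEdge_compl A e).mpr h), if_pos h]
  · rw [if_neg fun hc => h ((isCutEdge_compl A e).mp hc), if_neg h]

/-- The `K`-algebra homomorphism `φ_G : S_G → R_G`, `q_{A|Aᶜ} ↦ u_A`. -/
def phi {V : Type} [Finite V] (G : SimpleGraph V) :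
    MvPolynomial (Partition V) K →ₐ[K] MvPolynomial (Bool × Sym2 V) K :=
  aeval fun p : Partition V =>
    Quotient.lift (cutMonomial K G)
      (fun A B hAB => by
        have h : B = A ∨ B = Aᶜ := hAB
        rcases h with rfl | rfl
        · rfl
        · exact (cutMonomial_compl K G A).symm) p

/-- The cut ideal `I_G = ker φ_G`. -/
def cutIdeal {V : Type} [Finite V] (G : SimpleGraph V) :
    Ideal (MvPolynomial (Partition V) K) :=
  RingHom.ker (phi K G)

/-- The cut algebra `K[G]`, i.e. the image of `φ_G`: the `K`-subalgebra of `R_G`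
generated by the monomials `u_A`. -/
def cutAlgebra {V : Type} [Finite V] (G : SimpleGraph V) :
    Subalgebra K (MvPolynomial (Bool × Sym2 V) K) :=
  Algebra.adjoin K {m | ∃ A : Set V, m = cutMonomial K G A}

/-- The generator `u_A` of the cut algebra, as an element of the cut algebra. -/
def uGen {V : Type} [Finite V] (G : SimpleGraph V) (A : Set V) : ↥(cutAlgebra K G) :=
  ⟨cutMonomial K G A, Algebra.subset_adjoin ⟨A, rfl⟩⟩

/-- An element of `S_G/I` is homogeneous of degree `d` if it is the class of a homogeneous
polynomial of degree `d`. -/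
def QuotHomogeneous {σ : Type} (I : Ideal (MvPolynomial σ K)) (d : ℕ)
    (x : MvPolynomial σ K ⧸ I) : Prop :=
  ∃ f : MvPolynomial σ K, f.IsHomogeneous d ∧ Ideal.Quotient.mk I f = x

/-- The cut algebra of `H` is an algebra retract of the cut algebra of `G`:
there are homogeneous `K`-algebra homomorphisms `ι : K[H] → K[G]` (injective) and
`π : K[G] → K[H]` with `π ∘ ι = id`. -/
def CutAlgebraRetract {V W : Type} [Finite V] [Finite W]
    (H : SimpleGraph W) (G : SimpleGraph V) : Prop :=
  ∃ (ι : (MvPolynomial (Partition W) K ⧸ cutIdeal K H) →ₐ[K]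
      (MvPolynomial (Partition V) K ⧸ cutIdeal K G))
    (π : (MvPolynomial (Partition V) K ⧸ cutIdeal K G) →ₐ[K]
      (MvPolynomial (Partition W) K ⧸ cutIdeal K H)),
    Function.Injective ι ∧
    (∀ d x, QuotHomogeneous K (cutIdeal K H) d x →
      ∃ d', QuotHomogeneous K (cutIdeal K G) d' (ι x)) ∧
    (∀ d x, QuotHomogeneous K (cutIdeal K G) d x →
      ∃ d', QuotHomogeneous K (cutIdeal K H) d' (π x)) ∧
    π.comp ι = AlgHom.id K _

/-- The graph obtained from `G` by contracting the edge `{u, v}`: the vertex `u` is removed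
and merged into `v`. -/
def contractEdge {V : Type} (G : SimpleGraph V) (u v : V) :
    SimpleGraph {x : V // x ≠ u} where
  Adj a b := a ≠ b ∧
    (G.Adj a b ∨ ((a : V) = v ∧ G.Adj u b) ∨ ((b : V) = v ∧ G.Adj a u))
  symm := by
    refine ⟨?_⟩
    rintro a b ⟨hne, h | ⟨ha, h⟩ | ⟨hb, h⟩⟩
    · exact ⟨hne.symm, Or.inl h.symm⟩
    · exact ⟨hne.symm, Or.inr (Or.inr ⟨ha, h.symm⟩)⟩
    · exact ⟨hne.symm, Or.inr (Or.inl ⟨hb, h.symm⟩)⟩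
  loopless := ⟨fun a h => h.1 rfl⟩

/-- The induced subgraph `G_W` is a neighborhood-minor of `G`: `W` and `W' = Wᶜ` are nonempty
and there is a vertex `v ∈ W` with `W ∩ N_G(W') ⊆ N_{G_W}[v]`. -/
def IsNeighborhoodMinor {V : Type} (G : SimpleGraph V) (W : Set V) : Prop :=
  W.Nonempty ∧ Wᶜ.Nonempty ∧
    ∃ v ∈ W, ∀ x ∈ W, (∃ y ∈ Wᶜ, G.Adj y x) → x = v ∨ G.Adj v x

/-- The cut vector `δ_A ∈ {0,1}^E` of the partition `A | Aᶜ`. -/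
def cutVector {V : Type} (G : SimpleGraph V) (A : Set V) : ↥G.edgeSet → ℝ :=
  fun e => if IsCutEdge A (e : Sym2 V) then 1 else 0

/-- The cut polytope `Cut^□(G) ⊆ ℝ^E`: the convex hull of the cut vectors. -/
def cutPolytope {V : Type} (G : SimpleGraph V) : Set (↥G.edgeSet → ℝ) :=
  convexHull ℝ {x | ∃ A : Set V, x = cutVector G A}

/-- `F` is a face of `P`: either a trivial face (`P` or `∅`), or the intersection of `P`
with a supporting hyperplane. -/
def IsFace {α : Type} (P F : Set (α → ℝ)) : Prop :=
  F = P ∨ F = ∅ ∨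
    ∃ (φ : (α → ℝ) →ₗ[ℝ] ℝ) (c : ℝ), φ ≠ 0 ∧
      (∀ x ∈ P, φ x ≤ c) ∧ F = P ∩ {x | φ x = c}

/-- `P` and `Q` are affinely isomorphic: there is a bijective map from `P` onto `Q`
extending to an affine map. -/
def AffinelyIsomorphic {α β : Type} (P : Set (α → ℝ)) (Q : Set (β → ℝ)) : Prop :=
  ∃ f : (α → ℝ) →ᵃ[ℝ] (β → ℝ), Set.InjOn f P ∧ f '' P = Q

/-- The monomial `z · ∏_{e ∈ Cut(A)} y_e` of the polytopal algebra of the cut polytope;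
the variable `z` is `X none` and `y_e` is `X (some e)`. -/
def polytopeMonomial {V : Type} [Finite V] (G : SimpleGraph V) (A : Set V) :
    MvPolynomial (Option (Sym2 V)) K :=
  X none * ∏ e ∈ (Set.toFinite (cutSet G A)).toFinset, X (some e)

/-- The polytopal algebra `K[Cut^□(G)]`: the subalgebra of `K[y_e (e ∈ E), z]` generated by
the monomials `z · y^{δ_A}` attached to the lattice points (= cut vectors) of `Cut^□(G)`. -/
def polytopalAlgebra {V : Type} [Finite V] (G : SimpleGraph V) :
    Subalgebra K (MvPolynomial (Option (Sym2 V)) K) :=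
  Algebra.adjoin K {m | ∃ A : Set V, m = polytopeMonomial K G A}

/-- `G'` is a combinatorial retract of `G`: it is obtained from `G` by a finite sequence of
edge contractions and neighborhood-minors. -/
inductive CombinatorialRetract : ∀ {V W : Type}, SimpleGraph V → SimpleGraph W → Prop
  | refl {V : Type} (G : SimpleGraph V) : CombinatorialRetract G G
  | contract {V W : Type} (G : SimpleGraph V) (u v : V) (huv : G.Adj u v)
      (G' : SimpleGraph W) (h : CombinatorialRetract (contractEdge G u v) G') :
      CombinatorialRetract G G'
  | nbhdMinor {V W : Type} (G : SimpleGraph V) (S : Set V)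
      (hS : IsNeighborhoodMinor G S) (G' : SimpleGraph W)
      (h : CombinatorialRetract (SimpleGraph.induce S G) G') :
      CombinatorialRetract G G'

lemma isCutEdge_pair {V : Type} (A : Set V) (x y : V) :
    IsCutEdge A s(x, y) ↔ (x ∈ A ∧ y ∉ A) ∨ (y ∈ A ∧ x ∉ A) := by
  constructor
  · rintro ⟨a, b, he, ha, hb⟩
    rw [Sym2.eq_iff] at he
    rcases he with ⟨rfl, rfl⟩ | ⟨rfl, rfl⟩
    · exact Or.inl ⟨ha, hb⟩
    · exact Or.inr ⟨ha, hb⟩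
  · rintro (⟨hx, hy⟩ | ⟨hy, hx⟩)
    · exact ⟨x, y, rfl, hx, hy⟩
    · exact ⟨y, x, Sym2.eq_swap, hy, hx⟩

/-- For a connected graph, the cut pattern determines the partition. -/
lemma cut_pattern_inj {V : Type} (G : SimpleGraph V) (hconn : G.Connected)
    (A B : Set V) (h : ∀ e ∈ G.edgeSet, (IsCutEdge A e ↔ IsCutEdge B e)) :
    B = A ∨ B = Aᶜ := by
  classical
  have step : ∀ x y : V, G.Adj x y → ((x ∈ A ↔ x ∈ B) ↔ (y ∈ A ↔ y ∈ B)) := by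
    intro x y hxy
    have he := h s(x, y) (G.mem_edgeSet.mpr hxy)
    rw [isCutEdge_pair, isCutEdge_pair] at he
    tauto
  have walkP : ∀ {x y : V}, G.Walk x y → ((x ∈ A ↔ x ∈ B) ↔ (y ∈ A ↔ y ∈ B)) := by
    intro x y w
    induction w with
    | nil => exact Iff.rfl
    | cons hadj _ ih => exact (step _ _ hadj).trans ih
  have hall : ∀ x y : V, ((x ∈ A ↔ x ∈ B) ↔ (y ∈ A ↔ y ∈ B)) := fun x y =>
    ((hconn x y).elim fun w => walkP w)
  by_cases hx : ∃ x : V, ¬(x ∈ A ↔ x ∈ B)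
  · obtain ⟨x, hxn⟩ := hx
    right
    ext y
    have hy : ¬(y ∈ A ↔ y ∈ B) := fun hc => hxn ((hall x y).mpr hc)
    simp only [Set.mem_compl_iff]
    tauto
  · push_neg at hx
    left
    ext y
    exact (hx y).symm

lemma exists_single_of_degree_one {σ : Type} (d : σ →₀ ℕ) (h : d.degree = 1) :
    ∃ p, d = Finsupp.single p 1 := by
  classical
  have hne : d.support.Nonempty := by
    by_contra hc
    rw [Finset.not_nonempty_iff_eq_empty] at hc
    have hd0 : d = 0 := Finsupp.support_eq_empty.mp hc
    simp [hd0, Finsupp.degree] at h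
  obtain ⟨p, hp⟩ := hne
  refine ⟨p, ?_⟩
  have hdp : 1 ≤ d p := Nat.one_le_iff_ne_zero.mpr (Finsupp.mem_support_iff.mp hp)
  have hsum : d p + ∑ i ∈ d.support.erase p, d i = 1 := by
    rw [Finset.add_sum_erase _ _ hp]
    exact h
  have h1 : d p = 1 := le_antisymm (by omega) hdp
  have h2 : ∑ i ∈ d.support.erase p, d i = 0 := by omega
  rw [Finsupp.eq_single_iff]
  refine ⟨?_, h1⟩
  intro q hq
  simp only [Finset.mem_singleton]
  by_contra hqp
  have hq' : q ∈ d.support.erase p := Finset.mem_erase.mpr ⟨hqp, hq⟩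
  have := Finset.sum_eq_zero_iff.mp h2 q hq'
  exact Finsupp.mem_support_iff.mp hq this

theorem stmt9 {V : Type} [Fintype V] (K : Type) [Field K]
    (G : SimpleGraph V) (hconn : G.Connected) (hnc : G ≠ ⊤) :
    (∀ f ∈ cutIdeal K G, f.IsHomogeneous 1 → f = 0) ∧
    ∃ f ∈ cutIdeal K G, f ≠ 0 ∧ f.IsHomogeneous 2 := by
  classical
  set E0 := (Set.toFinite G.edgeSet).toFinset with hE0
  constructor
  · -- degree 1 part
    intro f hf h1
    have hker : phi K G f = 0 := hf
    -- key: for each A0, the coefficient of the corresponding variable is 0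
    have key : ∀ A0 : Set V,
        coeff (Finsupp.single (Quotient.mk (partitionSetoid V) A0) 1) f = 0 := by
      intro A0
      set x : Bool × Sym2 V → K :=
        fun be => if (be.1 = true ↔ IsCutEdge A0 be.2) then 1 else 0 with hxdef
      set y : Partition V → K := fun p => eval x (phi K G (X p)) with hydef
      have hevalmon : ∀ A : Set V, eval x (cutMonomial K G A) =
          if (∀ e ∈ E0, IsCutEdge A e ↔ IsCutEdge A0 e) then 1 else 0 := by
        intro A
        unfold cutMonomial
        rw [map_prod]
        have hfac : ∀ e ∈ E0, eval x (if IsCutEdge A e then X (true, e) else X (false, e))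
            = if (IsCutEdge A e ↔ IsCutEdge A0 e) then (1 : K) else 0 := by
          intro e _
          by_cases hA : IsCutEdge A e <;> by_cases hA0 : IsCutEdge A0 e <;>
            simp [hA, hA0, hxdef]
        rw [Finset.prod_congr rfl hfac, Finset.prod_boole]
        congr 1
      have hy : ∀ A : Set V, y (Quotient.mk (partitionSetoid V) A) =
          if Quotient.mk (partitionSetoid V) A = Quotient.mk (partitionSetoid V) A0
            then 1 else 0 := by
        intro A
        have h1' : y (Quotient.mk (partitionSetoid V) A) = eval x (cutMonomial K G A) := by
          simp only [hydef, phi, aeval_X, Quotient.lift_mk]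
        rw [h1', hevalmon A]
        congr 1
        simp only [eq_iff_iff]
        constructor
        · intro hmatch
          refine (Quotient.sound ?_).symm
          have := cut_pattern_inj G hconn A0 A
            (fun e he => ((hmatch e ((Set.toFinite G.edgeSet).mem_toFinset.mpr he)).symm))
          exact this
        · intro heq
          have hr : A = A0 ∨ A = A0ᶜ := Quotient.exact heq.symm
          intro e _
          rcases hr with rfl | rfl
          · exact Iff.rfl
          · exact isCutEdge_compl A0 e
      -- eval x ∘ phi = eval y
      have hcomp : ∀ g : MvPolynomial (Partition V) K,
          eval x (phi K G g) = eval y g := by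
        intro g
        induction g using MvPolynomial.induction_on with
        | C a => simp [phi, aeval_C]
        | add p q hp hq => simp [map_add, hp, hq]
        | mul_X p i hp => simp [map_mul, hp, hydef]
      have hzero : eval y f = 0 := by
        rw [← hcomp, hker, map_zero]
      rw [eval_eq] at hzero
      set d0 := Finsupp.single (Quotient.mk (partitionSetoid V) A0) 1 with hd0
      have hterm : ∀ d ∈ f.support,
          coeff d f * ∏ i ∈ d.support, y i ^ d i
            = if d = d0 then coeff d f else 0 := by
        intro d hd
        have hdeg : d.degree = 1 := by
          rw [show d.degree = Finsupp.weight 1 d from DFunLike.congr_fun Finsupp.degree_eq_weight_one d]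
          exact h1 (MvPolynomial.mem_support_iff.mp hd)
        obtain ⟨p, rfl⟩ := exists_single_of_degree_one d hdeg
        obtain ⟨A, rfl⟩ := Quotient.exists_rep p
        have hsupp : (Finsupp.single (Quotient.mk (partitionSetoid V) A) 1).support
            = {Quotient.mk (partitionSetoid V) A} := Finsupp.support_single_ne_zero _ one_ne_zero
        rw [hsupp, Finset.prod_singleton, Finsupp.single_eq_same, pow_one, hy]
        by_cases heq : Quotient.mk (partitionSetoid V) A = Quotient.mk (partitionSetoid V) A0
        · rw [if_pos heq, if_pos (by rw [hd0, heq]), mul_one]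
        · rw [if_neg heq, mul_zero, if_neg]
          intro hc
          apply heq
          rw [hd0] at hc
          have := DFunLike.congr_fun hc (Quotient.mk (partitionSetoid V) A)
          simp only [Finsupp.single_eq_same] at this
          by_contra hne
          rw [Finsupp.single_eq_of_ne' (Ne.symm hne)] at this
          exact one_ne_zero this
      rw [Finset.sum_congr rfl hterm, Finset.sum_ite_eq' f.support d0 (fun d => coeff d f)]
        at hzero
      by_cases hmem : d0 ∈ f.support
      · rwa [if_pos hmem] at hzero
      · exact MvPolynomial.notMem_support_iff.mp hmem
    -- now f = 0
    apply MvPolynomial.ext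
    intro d
    rw [coeff_zero]
    by_cases hd : coeff d f = 0
    · exact hd
    · have hdeg : d.degree = 1 := by
        rw [show d.degree = Finsupp.weight 1 d from DFunLike.congr_fun Finsupp.degree_eq_weight_one d]
        exact h1 hd
      obtain ⟨p, rfl⟩ := exists_single_of_degree_one d hdeg
      obtain ⟨A, rfl⟩ := Quotient.exists_rep p
      exact key A
  · -- degree 2 part
    -- find nonadjacent distinct vertices
    have hne : ∃ u v : V, u ≠ v ∧ ¬ G.Adj u v := by
      by_contra h
      push_neg at h
      apply hnc
      ext a b
      simp only [SimpleGraph.top_adj]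
      exact ⟨fun hab => hab.ne, h a b⟩
    obtain ⟨u, v, huv, hnadj⟩ := hne
    set p1 := Quotient.mk (partitionSetoid V) ({u} : Set V) with hp1
    set p2 := Quotient.mk (partitionSetoid V) ({v} : Set V) with hp2
    set p3 := Quotient.mk (partitionSetoid V) ({u, v} : Set V) with hp3
    set p4 := Quotient.mk (partitionSetoid V) (∅ : Set V) with hp4
    refine ⟨X p1 * X p2 - X p3 * X p4, ?_, ?_, ?_⟩
    · -- membership in the cut ideal
      show phi K G _ = 0
      rw [map_sub, map_mul, map_mul, sub_eq_zero]
      simp only [hp1, hp2, hp3, hp4, phi, aeval_X, Quotient.lift_mk]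
      unfold cutMonomial
      rw [← Finset.prod_mul_distrib, ← Finset.prod_mul_distrib]
      refine Finset.prod_congr rfl ?_
      intro e he
      have he' : e ∈ G.edgeSet := (Set.toFinite G.edgeSet).mem_toFinset.mp he
      revert he'
      induction e using Sym2.ind with
      | _ a b =>
        intro he'
        have hab : G.Adj a b := G.mem_edgeSet.mp he'
        have habne : a ≠ b := hab.ne
        have h1 : ¬(a = u ∧ b = v) := by
          rintro ⟨rfl, rfl⟩; exact hnadj hab
        have h2 : ¬(a = v ∧ b = u) := by
          rintro ⟨rfl, rfl⟩; exact hnadj hab.symm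
        simp only [isCutEdge_pair, Set.mem_singleton_iff, Set.mem_insert_iff,
          Set.mem_empty_iff_false, false_and, and_false, or_self, if_false]
        by_cases hau : a = u <;> by_cases hav : a = v <;> by_cases hbu : b = u <;>
          by_cases hbv : b = v <;>
          simp_all <;> ring
    · -- nonzero
      intro hzero
      have hc := congrArg (coeff (Finsupp.single p1 1 + Finsupp.single p2 1)) hzero
      rw [coeff_zero] at hc
      have hXX : ∀ p q : Partition V, (X p * X q : MvPolynomial (Partition V) K)
          = monomial (Finsupp.single p 1 + Finsupp.single q 1) 1 := by
        intro p q
        rw [X, X, monomial_mul, one_mul]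
      rw [coeff_sub, hXX, hXX, coeff_monomial, coeff_monomial, if_pos rfl] at hc
      have hne34 : (Finsupp.single p3 1 + Finsupp.single p4 1 : Partition V →₀ ℕ)
          ≠ Finsupp.single p1 1 + Finsupp.single p2 1 := by
        intro hc'
        have h4 := DFunLike.congr_fun hc' p4
        have hp41 : p4 ≠ p1 := by
          rw [hp4, hp1]
          intro hq
          rcases (Quotient.exact hq : ({u} : Set V) = ∅ ∨ ({u} : Set V) = ∅ᶜ) with h | h
          · exact (Set.singleton_nonempty u).ne_empty h
          · have hv : v ∈ ({u} : Set V) := by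
              rw [h]; exact Set.notMem_empty v
            exact huv (Set.mem_singleton_iff.mp hv).symm
        have hp42 : p4 ≠ p2 := by
          rw [hp4, hp2]
          intro hq
          rcases (Quotient.exact hq : ({v} : Set V) = ∅ ∨ ({v} : Set V) = ∅ᶜ) with h | h
          · exact (Set.singleton_nonempty v).ne_empty h
          · have hv : u ∈ ({v} : Set V) := by
              rw [h]; exact Set.notMem_empty u
            exact huv (Set.mem_singleton_iff.mp hv)
        rw [Finsupp.add_apply, Finsupp.add_apply, Finsupp.single_eq_same,
          Finsupp.single_eq_of_ne' (Ne.symm hp41), Finsupp.single_eq_of_ne' (Ne.symm hp42)]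
          at h4
        omega
      rw [if_neg hne34, sub_zero] at hc
      exact one_ne_zero hc
    · -- homogeneous of degree 2
      have hX2 : ∀ p q : Partition V,
          (X p * X q : MvPolynomial (Partition V) K).IsHomogeneous 2 :=
        fun p q => (isHomogeneous_X K p).mul (isHomogeneous_X K q)
      exact (hX2 p1 p2).sub (hX2 p3 p4)

end CutPaper
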